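/- arXiv:2311.03883 — 5 statements merged into one kernel-verified Lean document; each statement's English description precedes it below -/
import Mathlib

section
/- Let w be a complex number and let 0 ≤ γ₁ ≤ γ₂ be real numbers. If |1 + γ₂ w| ≤ 1, then |1 + γ₁ w| ≤ 1. Consequently, for any stability function R : ℂ → ℂ, the stability domain {z ∈ ℂ : |1 + γ₂(R(z) − 1)| ≤ 1} of the relaxed stability function with parameter γ₂ is contained in the stability domain {z ∈ ℂ : |1 + γ₁(R(z) − 1)| ≤ 1} with parameter γ₁. -/
/-- If `|1 + γ₂ w| ≤ 1` and `0 ≤ γ₁ ≤ γ₂`, then `|1 + γ₁ w| ≤ 1`; consequently the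
stability domain of the relaxed stability function with parameter `γ₂` is contained in
the one with parameter `γ₁`. -/
theorem relaxed_stability_domain_monotone
    (γ₁ γ₂ : ℝ) (hγ₁ : 0 ≤ γ₁) (hγ₁₂ : γ₁ ≤ γ₂) :
    (∀ w : ℂ, ‖1 + (γ₂ : ℂ) * w‖ ≤ 1 → ‖1 + (γ₁ : ℂ) * w‖ ≤ 1) ∧
    (∀ R : ℂ → ℂ,
      {z : ℂ | ‖1 + (γ₂ : ℂ) * (R z - 1)‖ ≤ 1} ⊆
      {z : ℂ | ‖1 + (γ₁ : ℂ) * (R z - 1)‖ ≤ 1}) := by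
  have key : ∀ w : ℂ, ‖1 + (γ₂ : ℂ) * w‖ ≤ 1 →
      ‖1 + (γ₁ : ℂ) * w‖ ≤ 1 := by
    intro w hw
    rcases eq_or_lt_of_le (hγ₁.trans hγ₁₂) with h0 | h0
    · have : γ₁ = 0 := le_antisymm (hγ₁₂.trans_eq h0.symm) hγ₁
      simp [this]
    · set t : ℝ := γ₁ / γ₂ with ht
      have ht0 : 0 ≤ t := div_nonneg hγ₁ h0.le
      have ht1 : t ≤ 1 := (div_le_one h0).mpr hγ₁₂
      have h2 : (γ₂ : ℂ) ≠ 0 := by exact_mod_cast h0.ne'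
      have htγ : (t : ℂ) * γ₂ = γ₁ := by
        rw [ht]; push_cast; field_simp
      have hdecomp : 1 + (γ₁ : ℂ) * w =
          ((1 - t : ℝ) : ℂ) * 1 + (t : ℂ) * (1 + (γ₂ : ℂ) * w) := by
        rw [← htγ]; push_cast; ring
      calc ‖1 + (γ₁ : ℂ) * w‖
          ≤ ‖((1 - t : ℝ) : ℂ) * 1‖ +
            ‖(t : ℂ) * (1 + (γ₂ : ℂ) * w)‖ := by
            rw [hdecomp]; exact norm_add_le _ _
        _ ≤ (1 - t) * 1 + t * 1 := by
            rw [norm_mul, norm_mul, Complex.norm_real, Complex.norm_real, Real.norm_eq_abs,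
              Real.norm_eq_abs, abs_of_nonneg (by linarith), abs_of_nonneg ht0, norm_one]
            gcongr
        _ = 1 := by ring
  exact ⟨key, fun R z hz => key (R z - 1) hz⟩
end

section
/- Let R : ℂ → ℂ satisfy the L-stability limit condition that R(x) → 0 as x → −∞ along the negative real axis (which lies in the closed left half-plane). If γ > 2, then the relaxed stability function R_γ(z) = 1 + γ(R(z) − 1) is not A-stable: there exists z ∈ ℂ with Re z ≤ 0 and |R_γ(z)| > 1. Hence γ ≤ 2 is necessary for A-stability of the relaxed update of an L-stable method. -/
open Filter in
/-- For an L-stable method (`R(x) → 0` as `x → −∞` along the real axis), `γ ≤ 2` is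
necessary for A-stability of the relaxed update: if `γ > 2`, then the relaxed stability
function `R_γ(z) = 1 + γ(R(z) − 1)` is not A-stable. -/
theorem relaxed_L_stable_gamma_le_two_necessary
    (R : ℂ → ℂ)
    (hL : Tendsto (fun x : ℝ => R (x : ℂ)) atBot (nhds 0))
    (γ : ℝ) (hγ : 2 < γ) :
    ∃ z : ℂ, z.re ≤ 0 ∧ 1 < ‖1 + (γ : ℂ) * (R z - 1)‖ := by
  have hγ0 : (0:ℝ) < γ := by linarith
  have hε : (0:ℝ) < (γ - 2) / (2 * γ) := div_pos (by linarith) (by linarith)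
  have hev := (Metric.tendsto_nhds.mp hL _ hε).and (eventually_le_atBot (0:ℝ))
  obtain ⟨x, hx, hxle⟩ := hev.exists
  refine ⟨x, by simpa using hxle, ?_⟩
  rw [dist_zero_right] at hx
  have hrw : (1 : ℂ) + (γ : ℂ) * (R x - 1) = ((1 : ℂ) - γ) + (γ : ℂ) * R x := by ring
  have h1 : ‖(1:ℂ) - γ‖ = γ - 1 := by
    rw [show (1:ℂ) - (γ:ℂ) = ((1 - γ : ℝ) : ℂ) by push_cast; ring, Complex.norm_real, Real.norm_eq_abs,
      abs_of_nonpos (by linarith)]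
    ring
  have h2 : ‖(γ:ℂ) * R x‖ < (γ - 2) / 2 := by
    rw [norm_mul, Complex.norm_real, Real.norm_eq_abs, abs_of_pos hγ0]
    calc γ * ‖R (x:ℂ)‖ < γ * ((γ - 2) / (2 * γ)) := by
          exact mul_lt_mul_of_pos_left hx hγ0
      _ = (γ - 2) / 2 := by field_simp
  have h3 : ‖(1:ℂ) - γ‖ - ‖(γ:ℂ) * R x‖
      ≤ ‖((1:ℂ) - γ) + (γ:ℂ) * R x‖ := by
    have := norm_sub_norm_le ((1:ℂ) - γ) (-((γ:ℂ) * R x))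
    simpa [sub_neg_eq_add] using this
  rw [hrw]
  have : γ - 1 - (γ - 2) / 2 < ‖((1:ℂ) - γ) + (γ:ℂ) * R x‖ := by
    rw [← h1]; linarith
  linarith
end

section
/- Let R(z) = (1 + z/2)/(1 − z/2) be the stability function of the implicit midpoint method. For every γ > 1, the relaxed stability function R_γ(z) = 1 + γ(R(z) − 1) is not A-stable: there exists z ∈ ℂ with Re z ≤ 0 and |R_γ(z)| > 1. (Indeed R_γ(x) → 1 − 2γ as the real number x → −∞, and |1 − 2γ| > 1 for γ > 1.) -/
/-- For the implicit midpoint stability function `R(z) = (1 + z/2)/(1 − z/2)` and any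
relaxation parameter `γ > 1`, the relaxed stability function
`R_γ(z) = 1 + γ(R(z) − 1)` is not A-stable. -/
theorem relaxed_implicit_midpoint_not_A_stable
    (γ : ℝ) (hγ : 1 < γ) :
    ∃ z : ℂ, z.re ≤ 0 ∧
      1 < ‖(1 + (γ : ℂ) * ((1 + z / 2) / (1 - z / 2) - 1))‖ := by
  have hγ0 : 0 < γ - 1 := by linarith
  set x : ℝ := 2 * γ / (γ - 1) with hxdef
  have hxpos : 0 < x := by positivity
  refine ⟨((-x : ℝ) : ℂ), by simpa using hxpos.le, ?_⟩
  have hden : (0:ℝ) < 1 + x / 2 := by linarith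
  have hcast : (1 + (γ : ℂ) * ((1 + ((-x : ℝ) : ℂ) / 2) / (1 - ((-x : ℝ) : ℂ) / 2) - 1))
      = ((1 + γ * ((1 - x / 2) / (1 + x / 2) - 1) : ℝ) : ℂ) := by
    push_cast
    ring_nf
  rw [hcast, Complex.norm_real, Real.norm_eq_abs, lt_abs]
  right
  rw [hxdef]
  rw [lt_neg]
  have h1 : (0:ℝ) < 2 * γ - 1 := by linarith
  have hne : γ - 1 ≠ 0 := ne_of_gt hγ0
  have hne2 : (1 : ℝ) + 2 * γ / (γ - 1) / 2 ≠ 0 := by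
    have : (1:ℝ) + 2 * γ / (γ - 1) / 2 = (2*γ - 1)/(γ-1) := by field_simp; ring
    rw [this]; positivity
  rw [show (1 : ℝ) + γ * ((1 - 2 * γ / (γ - 1) / 2) / (1 + 2 * γ / (γ - 1) / 2) - 1)
      = (2*γ - 1 - 2*γ^2)/(2*γ - 1) from by rw [eq_div_iff h1.ne']; field_simp; ring]
  rw [div_lt_iff₀ h1]
  nlinarith [sq_nonneg (γ - 1)]
end

section
/- The stability function of the implicit two-derivative method HB-I2DRK3-2s, given by u^{n+1} = u^n + (Δt/3)(f(u^n) + 2 f(u^{n+1})) − (Δt²/6) g^{(2)}(u^{n+1}) applied to u' = λu, is R(z) = (1 + z/3)/(1 − 2z/3 + z²/6), and this method is both A-stable and L-stable: |R(z)| ≤ 1 for every z ∈ ℂ with Re z ≤ 0 (the denominator 1 − 2z/3 + z²/6 has no zeros in the closed left half-plane), and R(x) → 0 as the real number x → −∞. -/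
section HBaux
open Filter

lemma key (x y : ℝ) (hx : x ≤ 0) :
    (1 + x / 3) ^ 2 + (y / 3) ^ 2 ≤
      (1 - 2 * x / 3 + (x ^ 2 - y ^ 2) / 6) ^ 2 + (x * y / 3 - 2 * y / 3) ^ 2 := by
  have hn : (0:ℝ) ≤ -x := by linarith
  nlinarith [mul_nonneg (mul_nonneg hn (by linarith : (0:ℝ) ≤ 6 - x))
      (by nlinarith : (0:ℝ) ≤ x ^ 2 - 2 * x + 12),
    mul_nonneg (mul_nonneg hn (by linarith : (0:ℝ) ≤ 4 - x)) (sq_nonneg y),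
    sq_nonneg (y * y)]

lemma den_ne (z : ℂ) (hz : z.re ≤ 0) : 1 - 2 * z / 3 + z ^ 2 / 6 ≠ 0 := by
  intro h
  have hre := congrArg Complex.re h
  have him := congrArg Complex.im h
  set x := z.re
  set y := z.im
  simp [Complex.sub_re, Complex.add_re, Complex.div_re, Complex.mul_re, Complex.sub_im,
    Complex.add_im, Complex.div_im, Complex.mul_im, Complex.normSq_apply, pow_two,
    Complex.re_ofNat, Complex.im_ofNat] at hre him
  nlinarith [sq_nonneg (x - 2), sq_nonneg y, sq_nonneg (y * (x - 2)), sq_nonneg x]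

lemma myabs_le (z : ℂ) (hz : z.re ≤ 0) :
    ‖(1 + z / 3)‖ ≤ ‖(1 - 2 * z / 3 + z ^ 2 / 6)‖ := by
  have h := key z.re z.im hz
  rw [Complex.norm_def, Complex.norm_def]
  apply Real.sqrt_le_sqrt
  simp only [Complex.normSq_apply, Complex.sub_re, Complex.add_re, Complex.div_re,
    Complex.mul_re, Complex.sub_im, Complex.add_im, Complex.div_im, Complex.mul_im,
    Complex.one_re, Complex.one_im, Complex.re_ofNat, Complex.im_ofNat, pow_two]
  nlinarith [h]

end HBaux


open Filter in
/-- The stability function of HB-I2DRK3-2s,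
`u^{n+1} = u^n + (Δt/3)(f(u^n) + 2 f(u^{n+1})) − (Δt²/6) g⁽²⁾(u^{n+1})` applied to
`u' = λu` (where `f(u) = λu` and `g⁽²⁾(u) = λ²u`), is
`R(z) = (1 + z/3)/(1 − 2z/3 + z²/6)` with `z = λΔt`; the method is A-stable and
L-stable, and the denominator has no zeros in the closed left half-plane. -/
theorem HB_I2DRK3_2s_stability_function_A_and_L_stable :
    (∀ lam Δt un un1 : ℂ,
        un1 = un + (Δt / 3) * (lam * un + 2 * (lam * un1)) -
          (Δt ^ 2 / 6) * (lam ^ 2 * un1) →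
        (1 - 2 * (lam * Δt) / 3 + (lam * Δt) ^ 2 / 6) * un1 =
          (1 + (lam * Δt) / 3) * un) ∧
    (∀ z : ℂ, z.re ≤ 0 → 1 - 2 * z / 3 + z ^ 2 / 6 ≠ 0) ∧
    (∀ z : ℂ, z.re ≤ 0 →
      ‖(1 + z / 3) / (1 - 2 * z / 3 + z ^ 2 / 6)‖ ≤ 1) ∧
    Tendsto (fun x : ℝ => (1 + (x : ℂ) / 3) / (1 - 2 * (x : ℂ) / 3 + (x : ℂ) ^ 2 / 6))
      atBot (nhds 0) := by
  refine ⟨fun lam Δt un un1 h => by linear_combination h, den_ne, fun z hz => ?_, ?_⟩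
  · rw [norm_div, div_le_one (norm_pos_iff.mpr (den_ne z hz))]
    exact myabs_le z hz
  · have hinv : Tendsto (fun x : ℝ => ((x : ℂ))⁻¹) atBot (nhds 0) := by
      have h0 : Tendsto (fun x : ℝ => x⁻¹) atBot (nhds 0) := by
        have ha : Tendsto (fun x : ℝ => -x) atBot atTop := tendsto_neg_atBot_atTop
        have hb : Tendsto (fun y : ℝ => y⁻¹) atTop (nhds (0:ℝ)) := tendsto_inv_atTop_zero
        have hc := (hb.comp ha).neg
        simp only [Function.comp] at hc
        simpa [inv_neg] using hc
      have := (Complex.continuous_ofReal.tendsto 0).comp h0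
      simpa [Function.comp_def, Complex.ofReal_inv] using this
    have hlim : Tendsto (fun x : ℝ =>
        (((x:ℂ))⁻¹ ^ 2 + ((x:ℂ))⁻¹ / 3) / (((x:ℂ))⁻¹ ^ 2 - 2 * ((x:ℂ))⁻¹ / 3 + 1 / 6))
        atBot (nhds 0) := by
      have h1 : Tendsto (fun x : ℝ => ((x:ℂ))⁻¹ ^ 2 + ((x:ℂ))⁻¹ / 3) atBot (nhds 0) := by
        have := ((hinv.pow 2).add (hinv.div_const 3))
        simpa using this
      have h2 : Tendsto (fun x : ℝ => ((x:ℂ))⁻¹ ^ 2 - 2 * ((x:ℂ))⁻¹ / 3 + 1 / 6) atBot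
          (nhds (1 / 6)) := by
        have := (((hinv.pow 2).sub ((hinv.const_mul 2).div_const 3)).add
          (tendsto_const_nhds (x := (1/6 : ℂ))))
        simpa using this
      convert h1.div h2 (by norm_num) using 2 <;> simp
    refine (tendsto_congr' ?_).2 hlim
    filter_upwards [eventually_lt_atBot (0:ℝ)] with x hx
    have hx0 : (x:ℂ) ≠ 0 := by exact_mod_cast ne_of_lt hx
    have hden : 1 - 2 * (x:ℂ) / 3 + (x:ℂ) ^ 2 / 6 ≠ 0 :=
      den_ne x (by simp [le_of_lt hx])
    have hden2 : ((x:ℂ))⁻¹ ^ 2 - 2 * ((x:ℂ))⁻¹ / 3 + 1 / 6 ≠ 0 := by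
      have he : ((x:ℂ))⁻¹ ^ 2 - 2 * ((x:ℂ))⁻¹ / 3 + 1 / 6 =
          (1 - 2 * (x:ℂ) / 3 + (x:ℂ) ^ 2 / 6) / (x:ℂ) ^ 2 := by
        field_simp
      rw [he]
      exact div_ne_zero hden (pow_ne_zero 2 hx0)
    rw [div_eq_div_iff hden hden2]
    have hcx : ((x:ℂ))⁻¹ * (x:ℂ) = 1 := inv_mul_cancel₀ hx0
    field_simp
end

section
/- Let ε ≠ 0 be a real number and define u : ℝ → ℝ² by u(t) = e^{−εt} (cos φ(t), sin φ(t)) with φ(t) = (e^{2εt} − 1)/(2ε). Then u(0) = (1, 0) and u is differentiable with u'(t) = (−u₂(t), u₁(t)) / ‖u(t)‖² − ε u(t) for all t, i.e., u is the analytical solution of the damped nonlinear oscillator. -/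
open Real in
/-- For `ε ≠ 0`, the function `u(t) = e^{−εt}(cos φ(t), sin φ(t))` with
`φ(t) = (e^{2εt} − 1)/(2ε)` satisfies `u(0) = (1, 0)` and solves the damped nonlinear
oscillator `u' = (−u₂, u₁)/‖u‖² − ε u` (written componentwise, with
`‖u(t)‖² = u₁(t)² + u₂(t)²` the squared Euclidean norm). -/
theorem damped_nonlinear_oscillator_exact_solution
    (ε : ℝ) (hε : ε ≠ 0)
    (φ : ℝ → ℝ) (hφ : ∀ t, φ t = (exp (2 * ε * t) - 1) / (2 * ε))
    (u₁ u₂ : ℝ → ℝ)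
    (hu₁ : ∀ t, u₁ t = exp (-ε * t) * cos (φ t))
    (hu₂ : ∀ t, u₂ t = exp (-ε * t) * sin (φ t)) :
    u₁ 0 = 1 ∧ u₂ 0 = 0 ∧
    (∀ t : ℝ,
      HasDerivAt u₁ (-u₂ t / (u₁ t ^ 2 + u₂ t ^ 2) - ε * u₁ t) t ∧
      HasDerivAt u₂ (u₁ t / (u₁ t ^ 2 + u₂ t ^ 2) - ε * u₂ t) t) := by
  have hφf : φ = fun t => (exp (2 * ε * t) - 1) / (2 * ε) := funext hφ
  have hu₁f : u₁ = fun t => exp (-ε * t) * cos (φ t) := funext hu₁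
  have hu₂f : u₂ = fun t => exp (-ε * t) * sin (φ t) := funext hu₂
  have h0 : φ 0 = 0 := by rw [hφ]; simp
  refine ⟨by rw [hu₁, h0]; simp, by rw [hu₂, h0]; simp, fun t => ?_⟩
  have hlin : HasDerivAt (fun t : ℝ => 2 * ε * t) (2 * ε) t := by
    simpa using (hasDerivAt_id t).const_mul (2 * ε)
  have hφ' : HasDerivAt φ (exp (2 * ε * t)) t := by
    rw [hφf]
    have h := (hlin.exp.sub_const 1).div_const (2 * ε)
    convert h using 1
    · rfl
    · rfl
    · exact (mul_div_cancel_right₀ _ (mul_ne_zero two_ne_zero hε)).symm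
  have hlin2 : HasDerivAt (fun t : ℝ => -ε * t) (-ε) t := by
    simpa using (hasDerivAt_id t).const_mul (-ε)
  have he : HasDerivAt (fun t => exp (-ε * t)) (exp (-ε * t) * (-ε)) t := hlin2.exp
  have hnorm : u₁ t ^ 2 + u₂ t ^ 2 = exp (-ε * t) ^ 2 := by
    rw [hu₁, hu₂]
    nlinarith [sin_sq_add_cos_sq (φ t)]
  have hexp2 : exp (2 * ε * t) * exp (-ε * t) ^ 2 = 1 := by
    rw [sq, ← Real.exp_add, ← Real.exp_add]
    ring_nf
    exact Real.exp_zero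
  have hne : exp (-ε * t) ^ 2 ≠ 0 := by positivity
  have hdiv : ∀ x : ℝ, x / exp (-ε * t) ^ 2 = x * exp (2 * ε * t) := by
    intro x
    rw [div_eq_iff hne]; linear_combination (-x) * hexp2
  constructor
  · have h : HasDerivAt (fun t => exp (-ε * t) * cos (φ t))
        (exp (-ε * t) * (-ε) * cos (φ t) + exp (-ε * t) * (-sin (φ t) * exp (2 * ε * t))) t :=
      he.mul hφ'.cos
    have key : -u₂ t / (u₁ t ^ 2 + u₂ t ^ 2) - ε * u₁ t
        = exp (-ε * t) * (-ε) * cos (φ t) + exp (-ε * t) * (-sin (φ t) * exp (2 * ε * t)) := by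
      rw [hnorm, hu₁, hu₂, hdiv]
      ring
    rw [key, hu₁f]
    exact h
  · have h : HasDerivAt (fun t => exp (-ε * t) * sin (φ t))
        (exp (-ε * t) * (-ε) * sin (φ t) + exp (-ε * t) * (cos (φ t) * exp (2 * ε * t))) t :=
      he.mul hφ'.sin
    have key : u₁ t / (u₁ t ^ 2 + u₂ t ^ 2) - ε * u₂ t
        = exp (-ε * t) * (-ε) * sin (φ t) + exp (-ε * t) * (cos (φ t) * exp (2 * ε * t)) := by
      rw [hnorm, hu₁, hu₂, hdiv]
      ring
    rw [key, hu₂f]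
    exact h
end
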